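/- Let 𝒮 be a hereditary set family on a finite ground set, let k ≥ 1, let M ⊆ {s ∈ 𝒮 : |s| ≥ k+1} be a collection of pairwise disjoint sets each of size at least k+1, let U = ⋃_{m ∈ M} m, and suppose M is maximal in the sense that there is no s ∈ 𝒮 with |s \ U| ≥ k+1. Let B be any collection of pairwise disjoint sets from 𝒮, and let A' be a collection of pairwise disjoint sets from 𝒮' := {s \ U : s ∈ 𝒮, s \ U ≠ ∅} satisfying Σ_{b ∈ B'} (|b| − 1) ≤ α · Σ_{a ∈ A'} (|a| − 1) where B' := {b \ U : b ∈ B, b \ U ≠ ∅} and α ≥ 1. Then Σ_{b ∈ B} (|b| − 1) ≤ max{α, (k+1)/k} · ( Σ_{a ∈ A'} (|a| − 1) + Σ_{m ∈ M} (|m| − 1) ). -/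

import Mathlib

open Finset

variable {α : Type} [DecidableEq α]

/-- A set family is hereditary if it contains every nonempty subset of each of its members. -/
def Hereditary (S : Finset (Finset α)) : Prop :=
  ∀ s ∈ S, ∀ t ⊆ s, t.Nonempty → t ∈ S

/-- The total weight `w(X) = ∑_{s ∈ X} (|s| - 1)` of a set family. -/
def wgt (X : Finset (Finset α)) : ℕ :=
  ∑ s ∈ X, (s.card - 1)

/-- The members of `X` are pairwise disjoint. -/
def PairwiseDisj (X : Finset (Finset α)) : Prop :=
  (↑X : Set (Finset α)).Pairwise (fun a b => Disjoint a b)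

/-- The neighborhood `N(X, A)` of `X` in `A`: members of `A` meeting some member of `X`. -/
def nbhd (X A : Finset (Finset α)) : Finset (Finset α) :=
  A.filter (fun a => ∃ x ∈ X, (a ∩ x).Nonempty)

theorem reduction_to_bounded_sizes (S : Finset (Finset α)) (hher : Hereditary S)
    (hne : ∀ s ∈ S, s.Nonempty) (k : ℕ) (hk : 1 ≤ k)
    (M : Finset (Finset α)) (hMS : M ⊆ S) (hMcard : ∀ m ∈ M, k + 1 ≤ m.card)
    (hMdisj : PairwiseDisj M)
    (U : Finset α) (hU : U = M.biUnion id)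
    (hmax : ¬ ∃ s ∈ S, k + 1 ≤ (s \ U).card)
    (B : Finset (Finset α)) (hBS : B ⊆ S) (hBdisj : PairwiseDisj B)
    (A' : Finset (Finset α))
    (hA'S : ∀ a ∈ A', ∃ s ∈ S, a = s \ U ∧ (s \ U).Nonempty)
    (hA'disj : PairwiseDisj A')
    (a : ℝ) (ha : 1 ≤ a)
    (happrox :
      ∑ b ∈ (B.filter (fun b => (b \ U).Nonempty)).image (fun b => b \ U),
          ((b.card : ℝ) - 1) ≤ a * ∑ x ∈ A', ((x.card : ℝ) - 1)) :
    ∑ b ∈ B, ((b.card : ℝ) - 1) ≤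
      max a (((k : ℝ) + 1) / (k : ℝ)) *
        (∑ x ∈ A', ((x.card : ℝ) - 1) + ∑ m ∈ M, ((m.card : ℝ) - 1)) := by

  have hk0 : (0:ℝ) < k := by exact_mod_cast hk
  set X := ∑ x ∈ A', ((x.card : ℝ) - 1) with hX
  set Y := ∑ m ∈ M, ((m.card : ℝ) - 1) with hY
  have hXnn : 0 ≤ X := Finset.sum_nonneg (fun x hx => by
    obtain ⟨s, _, rfl, hne'⟩ := hA'S x hx
    have h1 : 1 ≤ (s \ U).card := Finset.card_pos.mpr hne'
    have : (1:ℝ) ≤ ((s \ U).card : ℝ) := by exact_mod_cast h1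
    linarith)
  have hYnn : 0 ≤ Y := Finset.sum_nonneg (fun m hm => by
    have h1 : 1 ≤ m.card := le_trans (by omega) (hMcard m hm)
    have : (1:ℝ) ≤ (m.card : ℝ) := by exact_mod_cast h1
    linarith)
  -- rewrite image sum
  have himg : ∑ b ∈ (B.filter (fun b => (b \ U).Nonempty)).image (fun b => b \ U),
      ((b.card:ℝ) - 1)
      = ∑ b ∈ B.filter (fun b => (b \ U).Nonempty), (((b \ U).card:ℝ) - 1) := by
    rw [Finset.sum_image]
    intro x hx y hy hxy
    simp only [Finset.mem_coe, Finset.mem_filter] at hx hy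
    by_contra hne2
    have hd : Disjoint (x \ U) (y \ U) :=
      (hBdisj hx.1 hy.1 hne2).mono sdiff_subset sdiff_subset
    beta_reduce at hxy
    rw [hxy, disjoint_self] at hd
    exact hx.2.ne_empty (hxy ▸ hd)
  rw [himg] at happrox
  -- split B sum
  have hsplit : ∑ b ∈ B, ((b.card:ℝ) - 1)
      = ∑ b ∈ B.filter (fun b => (b \ U).Nonempty), ((b.card:ℝ) - 1)
      + ∑ b ∈ B.filter (fun b => ¬ (b \ U).Nonempty), ((b.card:ℝ) - 1) :=
    (Finset.sum_filter_add_sum_filter_not B _ _).symm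
  have hbound1 : ∑ b ∈ B.filter (fun b => (b \ U).Nonempty), ((b.card:ℝ) - 1)
      ≤ ∑ b ∈ B.filter (fun b => (b \ U).Nonempty), (((b \ U).card:ℝ) - 1)
      + ∑ b ∈ B.filter (fun b => (b \ U).Nonempty), ((b ∩ U).card : ℝ) := by
    rw [← Finset.sum_add_distrib]
    apply Finset.sum_le_sum
    intro b hb
    have hc : (b \ U).card + (b ∩ U).card = b.card := Finset.card_sdiff_add_card_inter b U
    have : ((b \ U).card : ℝ) + ((b ∩ U).card : ℝ) = (b.card : ℝ) := by exact_mod_cast hc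
    linarith
  have hbound2 : ∑ b ∈ B.filter (fun b => ¬ (b \ U).Nonempty), ((b.card:ℝ) - 1)
      ≤ ∑ b ∈ B.filter (fun b => ¬ (b \ U).Nonempty), ((b ∩ U).card : ℝ) := by
    apply Finset.sum_le_sum
    intro b hb
    simp only [Finset.mem_filter, Finset.not_nonempty_iff_eq_empty] at hb
    have hsub : b ⊆ U := by
      intro x hx
      by_contra hxU
      have : x ∈ b \ U := Finset.mem_sdiff.mpr ⟨hx, hxU⟩
      rw [hb.2] at this; exact absurd this (Finset.notMem_empty x)
    have : b ∩ U = b := Finset.inter_eq_left.mpr hsub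
    rw [this]
    linarith [Nat.cast_nonneg (α := ℝ) b.card]
  -- total inter bound
  have hinter : ∑ b ∈ B, ((b ∩ U).card : ℝ) ≤ (U.card : ℝ) := by
    have hdisj : ∀ x ∈ B, ∀ y ∈ B, x ≠ y → Disjoint (x ∩ U) (y ∩ U) := by
      intro x hx y hy hxy
      exact (hBdisj hx hy hxy).mono inter_subset_left inter_subset_left
    have hcard : (B.biUnion (fun b => b ∩ U)).card = ∑ b ∈ B, (b ∩ U).card :=
      Finset.card_biUnion hdisj
    have hsub : B.biUnion (fun b => b ∩ U) ⊆ U := by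
      intro x hx
      obtain ⟨b, _, hxb⟩ := Finset.mem_biUnion.mp hx
      exact (Finset.mem_inter.mp hxb).2
    have := Finset.card_le_card hsub
    rw [hcard] at this
    calc ∑ b ∈ B, ((b ∩ U).card : ℝ) = ((∑ b ∈ B, (b ∩ U).card : ℕ) : ℝ) := by
          push_cast; ring
      _ ≤ (U.card : ℝ) := by exact_mod_cast this
  have hUcard : (U.card : ℝ) = ∑ m ∈ M, (m.card : ℝ) := by
    rw [hU]
    have : (M.biUnion id).card = ∑ m ∈ M, m.card := by
      rw [Finset.card_biUnion]
      · simp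
      · intro x hx y hy hxy; exact hMdisj hx hy hxy
    rw [this]; push_cast; ring
  have hM : ∑ m ∈ M, (m.card : ℝ) ≤ ((k:ℝ)+1)/k * Y := by
    rw [hY, Finset.mul_sum]
    apply Finset.sum_le_sum
    intro m hm
    have hc : ((k:ℝ) + 1) ≤ (m.card : ℝ) := by exact_mod_cast hMcard m hm
    rw [div_mul_eq_mul_div, le_div_iff₀ hk0]
    nlinarith
  have hBinter : ∑ b ∈ B, ((b ∩ U).card : ℝ)
      = ∑ b ∈ B.filter (fun b => (b \ U).Nonempty), ((b ∩ U).card : ℝ)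
      + ∑ b ∈ B.filter (fun b => ¬ (b \ U).Nonempty), ((b ∩ U).card : ℝ) :=
    (Finset.sum_filter_add_sum_filter_not B _ _).symm
  have hmaxa : a ≤ max a (((k:ℝ)+1)/k) := le_max_left _ _
  have hmaxk : ((k:ℝ)+1)/k ≤ max a (((k:ℝ)+1)/k) := le_max_right _ _
  have key : ∑ b ∈ B, ((b.card:ℝ) - 1) ≤ a * X + ((k:ℝ)+1)/k * Y := by
    rw [hsplit]
    calc _ ≤ (∑ b ∈ B.filter (fun b => (b \ U).Nonempty), (((b \ U).card:ℝ) - 1)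
          + ∑ b ∈ B.filter (fun b => (b \ U).Nonempty), ((b ∩ U).card : ℝ))
          + ∑ b ∈ B.filter (fun b => ¬ (b \ U).Nonempty), ((b ∩ U).card : ℝ) :=
          add_le_add hbound1 hbound2
      _ = ∑ b ∈ B.filter (fun b => (b \ U).Nonempty), (((b \ U).card:ℝ) - 1)
          + ∑ b ∈ B, ((b ∩ U).card : ℝ) := by rw [hBinter]; ring
      _ ≤ a * X + ((k:ℝ)+1)/k * Y := by
          have := hinter
          rw [hUcard] at this
          linarith [happrox, hM]
  calc ∑ b ∈ B, ((b.card:ℝ) - 1) ≤ a * X + ((k:ℝ)+1)/k * Y := key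
    _ ≤ max a (((k:ℝ)+1)/k) * X + max a (((k:ℝ)+1)/k) * Y :=
        add_le_add (mul_le_mul_of_nonneg_right hmaxa hXnn)
          (mul_le_mul_of_nonneg_right hmaxk hYnn)
    _ = max a (((k:ℝ)+1)/k) * (X + Y) := by ring
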